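/- Every strictly convex Banach space has Steinhaus' property (S): for every quasi-finite set A there is a dense set Y such that for all y ∈ Y and n ∈ ℕ there is a ball centered at y containing exactly n points of A. -/

import Mathlib

/-- Property (S): for every quasi-finite set `A` (infinite, meeting every closed ball
in a finite set) there is a dense set `Y` such that for every `y ∈ Y` and every `n`
some open ball centred at `y` contains exactly `n` points of `A`. -/
def SteinhausS (X : Type*) [NormedAddCommGroup X] [NormedSpace ℝ X] : Prop :=
  ∀ A : Set X, A.Infinite → (∀ (x : X) (r : ℝ), (A ∩ Metric.closedBall x r).Finite) →
    ∃ Y : Set X, Dense Y ∧ ∀ y ∈ Y, ∀ n : ℕ, ∃ r > (0 : ℝ),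
      (A ∩ Metric.ball y r).Finite ∧ (A ∩ Metric.ball y r).ncard = n

/-- Property (S'): the unit sphere does not look locally alike at two distinct points. -/
def SteinhausS' (X : Type*) [NormedAddCommGroup X] [NormedSpace ℝ X] : Prop :=
  ∀ x y : X, ‖x‖ = 1 → ‖y‖ = 1 → x ≠ y → ∀ δ : ℝ, 0 < δ →
    ∃ z : X, ‖z‖ < δ ∧
      ((1 < ‖x + z‖ ∧ ‖y + z‖ < 1) ∨ (‖x + z‖ < 1 ∧ 1 < ‖y + z‖))

open Set Metric in
lemma count_step (D : Set ℝ) (hD : D.Infinite)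
    (hloc : ∀ R : ℝ, (D ∩ Set.Iic R).Finite) (r : ℝ)
    (hfin : (D ∩ Set.Iio r).Finite) :
    ∃ r' > r, ∃ m ∈ D, r ≤ m ∧ D ∩ Set.Iio r' = insert m (D ∩ Set.Iio r) := by
  obtain ⟨d0, hd0D, hd0⟩ : ∃ d0 ∈ D, ¬ d0 < r := by
    by_contra h
    push_neg at h
    exact hD (hfin.subset fun d hd => ⟨hd, h d hd⟩)
  push_neg at hd0
  have hE : (D ∩ Set.Icc r d0).Finite := (hloc d0).subset (fun x hx => ⟨hx.1, hx.2.2⟩)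
  obtain ⟨m, hmE, hmmin⟩ := Set.exists_min_image _ id hE ⟨d0, hd0D, hd0, le_rfl⟩
  obtain ⟨hmD, hrm, hmd0⟩ := hmE
  have key : ∀ d ∈ D, d < m → d < r := by
    intro d hdD hdm
    by_contra h
    push_neg at h
    exact absurd (hmmin d ⟨hdD, h, hdm.le.trans hmd0⟩) (not_le.mpr hdm)
  have hE' : (D ∩ Set.Ioc m (m+1)).Finite := (hloc (m+1)).subset fun x hx => ⟨hx.1, hx.2.2⟩
  rcases (D ∩ Set.Ioc m (m+1)).eq_empty_or_nonempty with hne | hne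
  · refine ⟨m + 1, by linarith, m, hmD, hrm, ?_⟩
    ext d
    simp only [Set.mem_inter_iff, Set.mem_Iio, Set.mem_insert_iff]
    constructor
    · rintro ⟨hdD, hd⟩
      rcases lt_trichotomy d m with h | h | h
      · exact Or.inr ⟨hdD, key d hdD h⟩
      · exact Or.inl h
      · exact absurd (⟨hdD, h, by linarith⟩ : d ∈ D ∩ Set.Ioc m (m+1))
          (Set.eq_empty_iff_forall_notMem.mp hne d)
    · rintro (rfl | ⟨hdD, hd⟩)
      · exact ⟨hmD, by linarith⟩
      · exact ⟨hdD, by linarith⟩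
  · obtain ⟨m', hm'E, hm'min⟩ := Set.exists_min_image _ id hE' hne
    obtain ⟨hm'D, hmm', hm'1⟩ := hm'E
    refine ⟨m', lt_of_le_of_lt hrm hmm', m, hmD, hrm, ?_⟩
    ext d
    simp only [Set.mem_inter_iff, Set.mem_Iio, Set.mem_insert_iff]
    constructor
    · rintro ⟨hdD, hd⟩
      rcases lt_trichotomy d m with h | h | h
      · exact Or.inr ⟨hdD, key d hdD h⟩
      · exact Or.inl h
      · exact absurd (hm'min d ⟨hdD, h, by linarith⟩) (not_le.mpr hd)
    · rintro (rfl | ⟨hdD, hd⟩)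
      · exact ⟨hmD, hmm'⟩
      · exact ⟨hdD, by linarith⟩

lemma count_main (D : Set ℝ) (hD : D.Infinite) (hpos : ∀ d ∈ D, 0 < d)
    (hloc : ∀ R : ℝ, (D ∩ Set.Iic R).Finite) (n : ℕ) :
    ∃ r > (0:ℝ), (D ∩ Set.Iio r).Finite ∧ (D ∩ Set.Iio r).ncard = n := by
  induction n with
  | zero =>
    rcases (D ∩ Set.Icc 0 1).eq_empty_or_nonempty with hne | hne
    · have he : D ∩ Set.Iio 1 = ∅ := by
        ext d
        simp only [Set.mem_inter_iff, Set.mem_Iio, Set.mem_empty_iff_false, iff_false, not_and]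
        intro hdD hd
        exact absurd (⟨hdD, (hpos d hdD).le, hd.le⟩ : d ∈ D ∩ Set.Icc 0 1)
          (Set.eq_empty_iff_forall_notMem.mp hne d)
      exact ⟨1, one_pos, by rw [he]; exact Set.finite_empty, by rw [he]; simp⟩
    · obtain ⟨m, hmE, hmmin⟩ := Set.exists_min_image _ id
        ((hloc 1).subset fun x hx => ⟨hx.1, hx.2.2⟩) hne
      obtain ⟨hmD, _, hm1⟩ := hmE
      have he : D ∩ Set.Iio m = ∅ := by
        ext d
        simp only [Set.mem_inter_iff, Set.mem_Iio, Set.mem_empty_iff_false, iff_false, not_and]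
        intro hdD hd
        exact absurd (hmmin d ⟨hdD, (hpos d hdD).le, by linarith⟩) (not_le.mpr hd)
      exact ⟨m, hpos m hmD, by rw [he]; exact Set.finite_empty, by rw [he]; simp⟩
  | succ n ih =>
    obtain ⟨r, hr, hfin, hcard⟩ := ih
    obtain ⟨r', hr', m, hmD, hrm, heq⟩ := count_step D hD hloc r hfin
    refine ⟨r', by linarith, ?_, ?_⟩
    · rw [heq]; exact hfin.insert m
    · rw [heq, Set.ncard_insert_of_notMem (fun h => absurd h.2 (not_lt.mpr hrm)) hfin, hcard]

open Set Metric in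
lemma dense_ne_dist {X : Type*} [NormedAddCommGroup X] [NormedSpace ℝ X]
    (hsc : ∀ x y : X, x ≠ y → ‖x‖ = 1 → ‖y‖ = 1 →
      ∀ t : ℝ, 0 < t → t < 1 → ‖t • x + (1 - t) • y‖ < 1)
    (a b : X) (hab : a ≠ b) :
    Dense {y : X | ‖y - a‖ ≠ ‖y - b‖} := by
  rw [Metric.dense_iff]
  intro y ε hε
  by_cases hy : ‖y - a‖ ≠ ‖y - b‖
  · exact ⟨y, Metric.mem_ball_self hε, hy⟩
  push_neg at hy
  by_contra hcon
  rw [Set.not_nonempty_iff_eq_empty] at hcon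
  have hall : ∀ z ∈ Metric.ball y ε, ‖z - a‖ = ‖z - b‖ := by
    intro z hz
    by_contra h
    exact Set.eq_empty_iff_forall_notMem.mp hcon z ⟨hz, h⟩
  set d : ℝ := ‖a - y‖ with hd
  have hay : a ≠ y := by
    rintro rfl
    apply hab
    have : ‖a - b‖ = 0 := by rw [← hy]; simp
    exact sub_eq_zero.mp (norm_eq_zero.mp this)
  have hdpos : 0 < d := by
    rw [hd, norm_pos_iff, sub_ne_zero]
    exact hay
  have hdb : ‖b - y‖ = d := by
    rw [hd, ← norm_sub_rev y a, ← norm_sub_rev y b, hy]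
  set s : ℝ := min (ε / (2 * d)) (1 / 2) with hs
  have hs0 : 0 < s := lt_min (div_pos hε (by linarith)) (by norm_num)
  have hs1 : s < 1 := lt_of_le_of_lt (min_le_right _ _) (by norm_num)
  have hsd : s * d < ε := by
    have : s ≤ ε / (2 * d) := min_le_left _ _
    have h2 : s * d ≤ ε / (2 * d) * d := mul_le_mul_of_nonneg_right this hdpos.le
    have h3 : ε / (2 * d) * d = ε / 2 := by
      field_simp
    linarith
  set z : X := y + s • (a - y) with hz
  have hzball : z ∈ Metric.ball y ε := by
    rw [Metric.mem_ball, dist_eq_norm]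
    have : z - y = s • (a - y) := by rw [hz]; abel
    rw [this, norm_smul, Real.norm_eq_abs, abs_of_pos hs0, ← hd]
    exact hsd
  have h1 : ‖z - a‖ = (1 - s) * d := by
    have : z - a = (s - 1) • (a - y) := by
      rw [hz, sub_smul, one_smul]; abel
    rw [this, norm_smul, Real.norm_eq_abs, abs_of_neg (by linarith : s - 1 < 0), ← hd]
    ring
  set w : X := (b - y) - s • (a - y) with hw
  have h2 : ‖z - b‖ = ‖w‖ := by
    have : z - b = -w := by rw [hz, hw]; abel
    rw [this, norm_neg]
  have hwnorm : ‖w‖ = (1 - s) * d := by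
    rw [← h2, ← hall z hzball, h1]
  have hwpos : (0:ℝ) < (1 - s) * d := mul_pos (by linarith) hdpos
  set q : X := d⁻¹ • (a - y) with hq
  set v : X := ((1 - s) * d)⁻¹ • w with hv
  have hqnorm : ‖q‖ = 1 := by
    rw [hq, norm_smul, Real.norm_eq_abs, abs_of_pos (inv_pos.mpr hdpos), ← hd]
    field_simp
  have hvnorm : ‖v‖ = 1 := by
    rw [hv, norm_smul, Real.norm_eq_abs, abs_of_pos (inv_pos.mpr hwpos), hwnorm]
    field_simp
    exact div_self (sub_pos.mpr hs1).ne'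
  have hqv : q ≠ v := by
    intro h
    apply hab
    have hw' : w = ((1 - s) * d) • q := by
      rw [h, hv, smul_smul, mul_inv_cancel₀ (ne_of_gt hwpos), one_smul]
    have e2 : (1 - s) * d * d⁻¹ = 1 - s := by field_simp
    rw [hq, smul_smul, e2] at hw'
    have hba : b - y = a - y := by
      have h2 : b - y = (1 - s) • (a - y) + s • (a - y) := by
        rw [← hw', hw]; abel
      rw [← add_smul] at h2
      simpa using h2
    have : b = a := by rwa [sub_left_inj] at hba
    exact this.symm
  have hlt := hsc q v hqv hqnorm hvnorm s hs0 hs1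
  have hsum : s • q + (1 - s) • v = d⁻¹ • (b - y) := by
    rw [hq, hv, hw, smul_smul, smul_smul]
    have e1 : (1 - s) * ((1 - s) * d)⁻¹ = d⁻¹ := by
      field_simp
      exact div_self (sub_pos.mpr hs1).ne'
    rw [e1]
    module
  rw [hsum, norm_smul, Real.norm_eq_abs, abs_of_pos (inv_pos.mpr hdpos), hdb] at hlt
  rw [inv_mul_cancel₀ (ne_of_gt hdpos)] at hlt
  exact lt_irrefl 1 hlt

theorem stmt8 {X : Type*} [NormedAddCommGroup X] [NormedSpace ℝ X] [CompleteSpace X]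
    (hsc : ∀ x y : X, x ≠ y → ‖x‖ = 1 → ‖y‖ = 1 →
      ∀ t : ℝ, 0 < t → t < 1 → ‖t • x + (1 - t) • y‖ < 1) :
    SteinhausS X := by
  intro A hA hAfin
  have hXnt : Nontrivial X := by
    obtain ⟨x, hx, y, hy, hxy⟩ := hA.nontrivial
    exact ⟨x, y, hxy⟩
  have hAc : A.Countable := by
    have hsub : A ⊆ ⋃ n : ℕ, A ∩ Metric.closedBall 0 n := by
      intro x hx
      obtain ⟨n, hn⟩ := exists_nat_ge ‖x‖
      exact Set.mem_iUnion.mpr ⟨n, hx, by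
        simpa [Metric.mem_closedBall, dist_zero_right] using hn⟩
    exact Set.Countable.mono hsub (Set.countable_iUnion fun n => (hAfin 0 n).countable)
  set U : X × X → Set X :=
    fun p => {y | y ≠ p.1} ∩ {y | p.1 ≠ p.2 → ‖y - p.1‖ ≠ ‖y - p.2‖} with hU
  have hUopen : ∀ p ∈ A ×ˢ A, IsOpen (U p) := by
    intro p _
    refine IsOpen.inter isOpen_ne ?_
    by_cases h : p.1 = p.2
    · have : {y : X | p.1 ≠ p.2 → ‖y - p.1‖ ≠ ‖y - p.2‖} = Set.univ := by
        ext yy; simp [h]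
      rw [this]; exact isOpen_univ
    · have : {y : X | p.1 ≠ p.2 → ‖y - p.1‖ ≠ ‖y - p.2‖}
          = {y : X | ‖y - p.1‖ ≠ ‖y - p.2‖} := by
        ext yy; simp [h]
      rw [this]
      exact isOpen_ne_fun ((continuous_id.sub continuous_const).norm) ((continuous_id.sub continuous_const).norm)
  have hUdense : ∀ p ∈ A ×ˢ A, Dense (U p) := by
    intro p _
    refine Dense.inter_of_isOpen_left ?_ ?_ isOpen_ne
    · exact dense_compl_singleton _
    · by_cases h : p.1 = p.2
      · have : {y : X | p.1 ≠ p.2 → ‖y - p.1‖ ≠ ‖y - p.2‖} = Set.univ := by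
          ext yy; simp [h]
        rw [this]; exact dense_univ
      · have : {y : X | p.1 ≠ p.2 → ‖y - p.1‖ ≠ ‖y - p.2‖}
            = {y : X | ‖y - p.1‖ ≠ ‖y - p.2‖} := by
          ext yy; simp [h]
        rw [this]
        exact dense_ne_dist hsc p.1 p.2 h
  have hYd : Dense (⋂ p ∈ A ×ˢ A, U p) :=
    dense_biInter_of_isOpen hUopen (hAc.prod hAc) hUdense
  refine ⟨_, hYd, ?_⟩
  intro y hy n
  have hyA : y ∉ A := fun hyA =>
    (Set.mem_iInter₂.mp hy (y, y) (Set.mk_mem_prod hyA hyA)).1 rfl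
  have hdist : ∀ a ∈ A, ∀ b ∈ A, a ≠ b → ‖y - a‖ ≠ ‖y - b‖ := fun a ha b hb hab =>
    (Set.mem_iInter₂.mp hy (a, b) (Set.mk_mem_prod ha hb)).2 hab
  set f : X → ℝ := fun a => dist a y with hf
  have hinj : Set.InjOn f A := by
    intro a ha b hb hfab
    by_contra h
    apply hdist a ha b hb h
    rw [norm_sub_rev, norm_sub_rev y b, ← dist_eq_norm, ← dist_eq_norm]
    exact hfab
  set D : Set ℝ := f '' A with hD
  have hDinf : D.Infinite := (Set.infinite_image_iff hinj).mpr hA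
  have hDpos : ∀ d ∈ D, 0 < d := by
    rintro d ⟨a, ha, rfl⟩
    exact dist_pos.mpr (fun h => hyA (h ▸ ha))
  have hDloc : ∀ R : ℝ, (D ∩ Set.Iic R).Finite := by
    intro R
    refine ((hAfin y R).image f).subset ?_
    rintro d ⟨⟨a, ha, rfl⟩, hdR⟩
    exact ⟨a, ⟨ha, Metric.mem_closedBall.mpr hdR⟩, rfl⟩
  obtain ⟨r, hr, hfin, hcard⟩ := count_main D hDinf hDpos hDloc n
  have himg : f '' (A ∩ Metric.ball y r) = D ∩ Set.Iio r := by
    ext d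
    constructor
    · rintro ⟨a, ⟨ha, hball⟩, rfl⟩
      exact ⟨⟨a, ha, rfl⟩, Metric.mem_ball.mp hball⟩
    · rintro ⟨⟨a, ha, rfl⟩, hlt⟩
      exact ⟨a, ⟨ha, Metric.mem_ball.mpr hlt⟩, rfl⟩
  refine ⟨r, hr, (hAfin y r).subset (Set.inter_subset_inter_right _ Metric.ball_subset_closedBall), ?_⟩
  rw [← Set.ncard_image_of_injOn (hinj.mono Set.inter_subset_left), himg, hcard]
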